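/- Fix A > 0, d ≥ 1, a coordinate ν ∈ {1, …, d}, and a point z ∈ ℝ^d. Let L : ℝ^d → ℝ be differentiable with bounded and continuous gradient. Let U be a random vector in ℝ^d with independent components, each uniformly distributed on [−A, A], and let V^ν be a random vector in ℝ^d with independent components such that every component other than the ν-th is uniformly distributed on [−A, A] and the ν-th component has probability density f_A(x) := C(A)^{-1} (e^A − e^x)(e^A − e^{−x}) on [−A, A], where C(A) := ∫_{−A}^{A} (e^A − e^x)(e^A − e^{−x}) dx. Then E[ L(z + U) (e^{−U_ν} − e^{U_ν}) ] = − e^{−A} (C(A)/(2A)) E[ ∂_ν L(z + V^ν) ]. -/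

import Mathlib

open Real MeasureTheory ProbabilityTheory

/-- The normalizing constant `C(A) = ∫_{-A}^{A} (e^A - e^x)(e^A - e^{-x}) dx`. -/
noncomputable def Cconst (A : ℝ) : ℝ :=
  ∫ x in (-A)..A, (exp A - exp x) * (exp A - exp (-x))

/-- The uniform distribution on `[-A, A]`. -/
noncomputable def unifLaw (A : ℝ) : Measure ℝ :=
  (ENNReal.ofReal (2 * A))⁻¹ • volume.restrict (Set.Icc (-A) A)

/-- The distribution on `[-A, A]` with density `f_A(x) = C(A)⁻¹ (e^A - e^x)(e^A - e^{-x})`. -/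
noncomputable def densLaw (A : ℝ) : Measure ℝ :=
  (volume.restrict (Set.Icc (-A) A)).withDensity
    fun x => ENNReal.ofReal ((Cconst A)⁻¹ * ((exp A - exp x) * (exp A - exp (-x))))

section aux

variable {A : ℝ}

lemma weight_nonneg (hA : 0 < A) {x : ℝ} (hx : x ∈ Set.Icc (-A) A) :
    0 ≤ (exp A - exp x) * (exp A - exp (-x)) := by
  have h1 : exp x ≤ exp A := exp_le_exp.2 hx.2
  have h2 : exp (-x) ≤ exp A := exp_le_exp.2 (by linarith [hx.1])
  nlinarith

lemma Cconst_pos (hA : 0 < A) : 0 < Cconst A := by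
  apply intervalIntegral.intervalIntegral_pos_of_pos_on
  · exact (by fun_prop : Continuous fun x : ℝ =>
      (exp A - exp x) * (exp A - exp (-x))).intervalIntegrable _ _
  · intro x hx
    have h1 : exp x < exp A := exp_lt_exp.2 hx.2
    have h2 : exp (-x) < exp A := exp_lt_exp.2 (by linarith [hx.1])
    nlinarith
  · linarith

lemma set_integral_Icc_weight (hA : 0 < A) :
    ∫ x in Set.Icc (-A) A, (exp A - exp x) * (exp A - exp (-x)) = Cconst A := by
  rw [integral_Icc_eq_integral_Ioc, ← intervalIntegral.integral_of_le (by linarith), Cconst]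

lemma unifLaw_prob (hA : 0 < A) : IsProbabilityMeasure (unifLaw A) := by
  constructor
  rw [unifLaw]
  simp only [Measure.smul_apply, Measure.restrict_apply MeasurableSet.univ, Set.univ_inter,
    Real.volume_Icc, smul_eq_mul]
  rw [show A - -A = 2 * A by ring]
  exact ENNReal.inv_mul_cancel (by positivity) ENNReal.ofReal_ne_top

lemma densLaw_prob (hA : 0 < A) : IsProbabilityMeasure (densLaw A) := by
  constructor
  rw [densLaw, withDensity_apply _ MeasurableSet.univ, Measure.restrict_univ]
  rw [← ofReal_integral_eq_lintegral_ofReal]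
  · rw [integral_const_mul, set_integral_Icc_weight hA,
      inv_mul_cancel₀ (Cconst_pos hA).ne', ENNReal.ofReal_one]
  · exact (continuous_const.mul (by fun_prop : Continuous fun x : ℝ =>
      (exp A - exp x) * (exp A - exp (-x)))).continuousOn.integrableOn_compact isCompact_Icc
  · filter_upwards [ae_restrict_mem measurableSet_Icc] with x hx
    exact mul_nonneg (inv_nonneg.2 (Cconst_pos hA).le) (weight_nonneg hA hx)

lemma unifLaw_compl (hA : 0 < A) : unifLaw A (Set.Icc (-A) A)ᶜ = 0 := by
  rw [unifLaw]
  simp [Measure.restrict_apply (measurableSet_Icc.compl)]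

lemma densLaw_compl (hA : 0 < A) : densLaw A (Set.Icc (-A) A)ᶜ = 0 := by
  rw [densLaw, withDensity_apply _ measurableSet_Icc.compl,
    Measure.restrict_restrict measurableSet_Icc.compl]
  simp

lemma integral_unifLaw (hA : 0 < A) (g : ℝ → ℝ) :
    ∫ t, g t ∂(unifLaw A) = (2 * A)⁻¹ * ∫ t in (-A)..A, g t := by
  rw [unifLaw, integral_smul_measure, ENNReal.toReal_inv, ENNReal.toReal_ofReal (by linarith),
    integral_Icc_eq_integral_Ioc, ← intervalIntegral.integral_of_le (by linarith)]
  simp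

lemma integral_densLaw (hA : 0 < A) (g : ℝ → ℝ) :
    ∫ t, g t ∂(densLaw A)
      = (Cconst A)⁻¹ * ∫ t in (-A)..A, g t * ((exp A - exp t) * (exp A - exp (-t))) := by
  rw [densLaw]
  rw [show (fun x => ENNReal.ofReal ((Cconst A)⁻¹ * ((exp A - exp x) * (exp A - exp (-x)))))
      = (fun x => ((Real.toNNReal ((Cconst A)⁻¹ * ((exp A - exp x) * (exp A - exp (-x)))) : NNReal)
          : ENNReal)) from rfl]
  rw [integral_withDensity_eq_integral_smul (by fun_prop) g]
  rw [setIntegral_congr_fun measurableSet_Icc (g := fun t =>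
      (Cconst A)⁻¹ * (g t * ((exp A - exp t) * (exp A - exp (-t)))))]
  · rw [integral_const_mul, integral_Icc_eq_integral_Ioc,
      ← intervalIntegral.integral_of_le (by linarith)]
  · intro x hx
    have h0 : 0 ≤ (Cconst A)⁻¹ * ((exp A - exp x) * (exp A - exp (-x))) :=
      mul_nonneg (inv_nonneg.2 (Cconst_pos hA).le) (weight_nonneg hA hx)
    simp only [NNReal.smul_def, Real.coe_toNNReal _ h0, smul_eq_mul]
    ring

lemma phi_hasDeriv (A t : ℝ) :
    HasDerivAt (fun t => exp A - exp (-t) - exp t + exp (-A)) (exp (-t) - exp t) t := by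
  have h1 : HasDerivAt (fun t : ℝ => exp (-t)) (-exp (-t)) t := by
    exact ((Real.hasDerivAt_exp (-t)).comp t (hasDerivAt_neg t)).congr_deriv (by simp)
  have h2 := Real.hasDerivAt_exp t
  have := ((h1.const_sub (exp A)).sub h2).add_const (exp (-A))
  refine this.congr_deriv ?_
  ring

lemma parts (hA : 0 < A) {g g' : ℝ → ℝ} (hg : ∀ t, HasDerivAt g (g' t) t)
    (hg' : Continuous g') :
    ∫ t in (-A)..A, g t * (exp (-t) - exp t)
      = -exp (-A) * ∫ t in (-A)..A, g' t * ((exp A - exp t) * (exp A - exp (-t))) := by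
  set φ : ℝ → ℝ := fun t => exp A - exp (-t) - exp t + exp (-A) with hφdef
  have key := intervalIntegral.integral_mul_deriv_eq_deriv_mul
    (a := -A) (b := A) (u := g) (v := φ) (u' := g') (v' := fun t => exp (-t) - exp t)
    (fun x _ => hg x) (fun x _ => phi_hasDeriv A x)
    (hg'.intervalIntegrable _ _)
    ((by fun_prop : Continuous fun t : ℝ => exp (-t) - exp t).intervalIntegrable _ _)
  have hφA : φ A = 0 := by simp [hφdef]
  have hφA' : φ (-A) = 0 := by simp [hφdef]
  rw [key, hφA, hφA', mul_zero, mul_zero, sub_zero, zero_sub]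
  rw [← intervalIntegral.integral_const_mul, ← intervalIntegral.integral_neg]
  apply intervalIntegral.integral_congr
  intro x hx
  have hx1 : φ x = exp (-A) * ((exp A - exp x) * (exp A - exp (-x))) := by
    simp only [hφdef]
    rw [Real.exp_neg x, Real.exp_neg A]
    field_simp
    ring
  simp only [hx1]; ring

variable {n : ℕ}

noncomputable abbrev toE (x : Fin (n + 1) → ℝ) : EuclideanSpace ℝ (Fin (n + 1)) :=
  (WithLp.equiv 2 (Fin (n + 1) → ℝ)).symm x

lemma insertNth_decomp (ν : Fin (n + 1)) (t : ℝ) (y : Fin n → ℝ) :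
    ν.insertNth t y = ν.insertNth 0 y + t • (Pi.single ν 1 : Fin (n + 1) → ℝ) := by
  ext i
  rcases eq_or_ne i ν with rfl | h
  · simp
  · obtain ⟨j, rfl⟩ := Fin.exists_succAbove_eq h
    simp [Pi.single_eq_of_ne (Fin.succAbove_ne ν j)]

lemma grad_line (L : EuclideanSpace ℝ (Fin (n + 1)) → ℝ) (hL : Differentiable ℝ L)
    (z : EuclideanSpace ℝ (Fin (n + 1))) (ν : Fin (n + 1)) (y : Fin n → ℝ) (t : ℝ) :
    HasDerivAt (fun t : ℝ => L (z + toE (ν.insertNth t y)))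
      (gradient L (z + toE (ν.insertNth t y)) ν) t := by
  set e : EuclideanSpace ℝ (Fin (n + 1)) := EuclideanSpace.single ν 1 with he
  have hsingle : toE (Pi.single ν 1 : Fin (n + 1) → ℝ) = e := rfl
  have hcoord : ∀ s : ℝ, toE (ν.insertNth s y) = toE (ν.insertNth 0 y) + s • e := by
    intro s
    rw [insertNth_decomp ν s y, ← hsingle]
    rfl
  have hc : HasDerivAt (fun s : ℝ => z + toE (ν.insertNth s y)) e t := by
    have hfun : (fun s : ℝ => z + toE (ν.insertNth s y))
        = fun s : ℝ => (z + toE (ν.insertNth 0 y)) + s • e :=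
      funext fun s => by rw [hcoord s, add_assoc]
    rw [hfun]
    have h1 : HasDerivAt (fun s : ℝ => s • e) e t := by
      simpa using (hasDerivAt_id t).smul_const e
    simpa using h1.const_add (z + toE (ν.insertNth 0 y))
  have hcomp := ((hL _).hasFDerivAt).comp_hasDerivAt t hc
  refine hcomp.congr_deriv ?_
  have hval : fderiv ℝ L (z + toE (ν.insertNth t y)) e
      = gradient L (z + toE (ν.insertNth t y)) ν := by
    rw [← InnerProductSpace.toDual_symm_apply (𝕜 := ℝ)]
    rw [show ((InnerProductSpace.toDual ℝ _).symm (fderiv ℝ L (z + toE (ν.insertNth t y))))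
      = gradient L (z + toE (ν.insertNth t y)) from rfl]
    rw [he, EuclideanSpace.inner_single_right]
    simp
  rw [hval]

lemma toE_continuous : Continuous (toE (n := n)) :=
  (EuclideanSpace.equiv (Fin (n + 1)) ℝ).symm.continuous

/-- Integrability of a continuous function w.r.t. a product of prob. measures on `[-A,A]`. -/
lemma integrable_pi (hA : 0 < A) (μ : Fin (n + 1) → Measure ℝ)
    [∀ i, IsProbabilityMeasure (μ i)]
    (hμ : ∀ i, μ i (Set.Icc (-A) A)ᶜ = 0)
    {H : (Fin (n + 1) → ℝ) → ℝ} (hH : Continuous H) :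
    Integrable H (Measure.pi μ) := by
  obtain ⟨C, hC⟩ := (isCompact_univ_pi fun _ : Fin (n + 1) => isCompact_Icc
      (a := -A) (b := A)).exists_bound_of_continuousOn hH.continuousOn
  have hae : ∀ᵐ x ∂(Measure.pi μ), ∀ i, x i ∈ Set.Icc (-A) A := by
    have hmem : (Set.univ.pi fun _ : Fin (n + 1) => Set.Icc (-A) A)
        ∈ Filter.pi fun i => ae (μ i) :=
      Filter.pi_mem_pi Set.finite_univ fun i _ => mem_ae_iff.2 (hμ i)
    have := Measure.ae_pi_le_pi (μ := μ) hmem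
    filter_upwards [this] with x hx i
    exact hx i (Set.mem_univ i)
  apply (integrable_const C).mono' hH.aestronglyMeasurable
  filter_upwards [hae] with x hx
  exact hC x fun i _ => hx i

/-- Splitting a pi-integral along coordinate `ν`. -/
lemma pi_split (hA : 0 < A) (ν : Fin (n + 1)) (κ : Measure ℝ) [IsProbabilityMeasure κ]
    [IsProbabilityMeasure (unifLaw A)]
    {H : (Fin (n + 1) → ℝ) → ℝ}
    (hH : Integrable H (Measure.pi fun i => if i = ν then κ else unifLaw A)) :
    ∫ x, H x ∂(Measure.pi fun i => if i = ν then κ else unifLaw A)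
      = ∫ y, (∫ t, H (ν.insertNth t y) ∂κ) ∂(Measure.pi fun _ : Fin n => unifLaw A) := by
  set μ : Fin (n + 1) → Measure ℝ := fun i => if i = ν then κ else unifLaw A with hμ
  have hrest : (fun j : Fin n => μ (ν.succAbove j)) = fun _ : Fin n => unifLaw A := by
    funext j
    simp [hμ, Fin.succAbove_ne ν j]
  haveI : ∀ i, IsProbabilityMeasure (μ i) := fun i => by
    rw [hμ]; dsimp only; split <;> infer_instance
  haveI : ∀ i, SigmaFinite (μ i) := fun i => inferInstance
  have hMP := measurePreserving_piFinSuccAbove μ ν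
  rw [hrest] at hMP
  have hν : μ ν = κ := by simp [hμ]
  rw [hν] at hMP
  set e := MeasurableEquiv.piFinSuccAbove (fun _ : Fin (n + 1) => ℝ) ν
  set G : ℝ × (Fin n → ℝ) → ℝ := fun p => H (ν.insertNth p.1 p.2) with hG
  have hGe : ∀ x, G (e x) = H x := fun x =>
    congrArg H (Fin.insertNth_self_removeNth ν x)
  have hGint : Integrable G (κ.prod (Measure.pi fun _ : Fin n => unifLaw A)) := by
    rw [← hMP.integrable_comp_emb e.measurableEmbedding]
    exact hH.congr (Filter.Eventually.of_forall fun x => (hGe x).symm)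
  calc ∫ x, H x ∂(Measure.pi μ) = ∫ x, G (e x) ∂(Measure.pi μ) := by
        simp_rw [hGe]
    _ = ∫ p, G p ∂(κ.prod (Measure.pi fun _ : Fin n => unifLaw A)) :=
        hMP.integral_comp e.measurableEmbedding G
    _ = ∫ y, ∫ t, G (t, y) ∂κ ∂(Measure.pi fun _ : Fin n => unifLaw A) :=
        integral_prod_symm G hGint

end aux

theorem stmt_7 (d : ℕ) (hd : 1 ≤ d) (ν : Fin d) (A : ℝ) (hA : 0 < A)
    (z : EuclideanSpace ℝ (Fin d))
    (L : EuclideanSpace ℝ (Fin d) → ℝ) (hL : Differentiable ℝ L)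
    (M : ℝ) (hLbdd : ∀ x, ‖gradient L x‖ ≤ M) (hLcont : Continuous (gradient L))
    (Ω : Type*) [MeasureSpace Ω] [IsProbabilityMeasure (ℙ : Measure Ω)]
    (U V : Ω → EuclideanSpace ℝ (Fin d)) (hU : Measurable U) (hV : Measurable V)
    (hUlaw : Measure.map (fun ω i => U ω i) ℙ = Measure.pi fun _ : Fin d => unifLaw A)
    (hVlaw : Measure.map (fun ω i => V ω i) ℙ =
      Measure.pi fun i : Fin d => if i = ν then densLaw A else unifLaw A) :
    ∫ ω, L (z + U ω) * (exp (-(U ω ν)) - exp (U ω ν)) =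
      -exp (-A) * (Cconst A / (2 * A)) * ∫ ω, gradient L (z + V ω) ν := by
  obtain ⟨n, rfl⟩ : ∃ n, d = n + 1 := ⟨d - 1, (Nat.succ_pred_eq_of_pos hd).symm⟩
  haveI := unifLaw_prob hA
  haveI := densLaw_prob hA
  set F : (Fin (n + 1) → ℝ) → ℝ :=
    fun x => L (z + toE x) * (exp (-(x ν)) - exp (x ν)) with hF
  set F' : (Fin (n + 1) → ℝ) → ℝ := fun x => gradient L (z + toE x) ν with hF'
  have hFcont : Continuous F := by
    apply Continuous.mul
    · exact hL.continuous.comp (continuous_const.add toE_continuous)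
    · fun_prop
  have hF'cont : Continuous F' := by
    have h1 : Continuous fun x : Fin (n + 1) → ℝ => gradient L (z + toE x) :=
      hLcont.comp (continuous_const.add toE_continuous)
    exact (continuous_apply ν).comp ((PiLp.continuous_ofLp 2 _).comp h1)
  -- transfer to pi measures
  have hUmap : ∫ ω, L (z + U ω) * (exp (-(U ω ν)) - exp (U ω ν))
      = ∫ x, F x ∂(Measure.pi fun _ : Fin (n + 1) => unifLaw A) := by
    have hUm : AEMeasurable (fun ω (i : Fin (n + 1)) => U ω i) ℙ := ((WithLp.measurable_ofLp 2 _).comp hU).aemeasurable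
    rw [← hUlaw, integral_map hUm hFcont.aestronglyMeasurable]
    rfl
  have hVmap : ∫ ω, gradient L (z + V ω) ν
      = ∫ x, F' x ∂(Measure.pi fun i : Fin (n + 1) => if i = ν then densLaw A else unifLaw A) := by
    have hVm : AEMeasurable (fun ω (i : Fin (n + 1)) => V ω i) ℙ := ((WithLp.measurable_ofLp 2 _).comp hV).aemeasurable
    rw [← hVlaw, integral_map hVm hF'cont.aestronglyMeasurable]
    rfl
  -- integrability
  have hiff : (fun i : Fin (n + 1) => if i = ν then unifLaw A else unifLaw A)
      = fun _ => unifLaw A := by simp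
  haveI hinst : ∀ i : Fin (n + 1),
      IsProbabilityMeasure (if i = ν then densLaw A else unifLaw A) := fun i => by
    split <;> infer_instance
  have hFint : Integrable F (Measure.pi fun i : Fin (n + 1) =>
      if i = ν then unifLaw A else unifLaw A) := by
    rw [hiff]
    exact integrable_pi hA _ (fun i => unifLaw_compl hA) hFcont
  have hF'int : Integrable F' (Measure.pi fun i : Fin (n + 1) =>
      if i = ν then densLaw A else unifLaw A) := by
    apply integrable_pi hA _ (fun i => ?_) hF'cont
    split
    · exact densLaw_compl hA
    · exact unifLaw_compl hA
  have hsplitU := pi_split hA ν (unifLaw A) hFint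
  have hsplitV := pi_split hA ν (densLaw A) hF'int
  rw [hiff] at hsplitU
  -- pointwise inner-integral identity
  have hinner : ∀ y : Fin n → ℝ,
      ∫ t, F (ν.insertNth t y) ∂(unifLaw A)
        = (-exp (-A) * (Cconst A / (2 * A))) * ∫ t, F' (ν.insertNth t y) ∂(densLaw A) := by
    intro y
    have hins : Continuous fun t : ℝ => (ν.insertNth t y : Fin (n + 1) → ℝ) := by
      have h2 : (fun t : ℝ => (ν.insertNth t y : Fin (n + 1) → ℝ))
          = fun t => ν.insertNth 0 y + t • (Pi.single ν 1 : Fin (n + 1) → ℝ) :=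
        funext fun t => insertNth_decomp ν t y
      rw [h2]; fun_prop
    have hg'c : Continuous fun t => F' (ν.insertNth t y) := hF'cont.comp hins
    have hgd : ∀ t, HasDerivAt (fun t => L (z + toE (ν.insertNth t y)))
        (F' (ν.insertNth t y)) t := fun t => grad_line L hL z ν y t
    have hparts := parts hA hgd hg'c
    rw [integral_unifLaw hA, integral_densLaw hA]
    rw [show (fun t => F (ν.insertNth t y))
        = fun t => L (z + toE (ν.insertNth t y)) * (exp (-t) - exp t) from
      funext fun t => by simp only [hF, Fin.insertNth_apply_same]]
    rw [hparts]
    have hC := (Cconst_pos hA).ne'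
    have hA' : (2 : ℝ) * A ≠ 0 := by positivity
    field_simp
  rw [hUmap, hVmap, hsplitU, hsplitV]
  simp_rw [hinner]
  rw [integral_const_mul]
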